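/- Let (λ₁, λ₂) ∈ Λ, i.e., 0 ≤ λ₂ ≤ λ₁ ≤ 1 and 0 < 1 - (λ₁+λ₂)λ₂ ≤ λ₁. If real numbers μ_α, μ_β satisfy λ₁ μ_α + (1 - (λ₁+λ₂)λ₂) μ_β ≥ 0 and μ_α ≤ μ_β, then μ_α + μ_β ≥ 0. -/

import Mathlib

/-- Membership in the parameter set Λ. -/
def InLambda (x y : ℝ) : Prop :=
  0 ≤ y ∧ y ≤ x ∧ x ≤ 1 ∧ 0 < 1 - (x + y) * y ∧ 1 - (x + y) * y ≤ x

theorem stmt_3 (l1 l2 : ℝ) (hΛ : InLambda l1 l2) (a b : ℝ)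
    (h : 0 ≤ l1 * a + (1 - (l1 + l2) * l2) * b) (hab : a ≤ b) :
    0 ≤ a + b := by
  obtain ⟨h0, h1, h2, h3, h4⟩ := hΛ
  rcases le_or_gt 0 a with ha | ha
  · linarith
  · have hl1 : 0 < l1 := by linarith
    have hb : 0 ≤ b := by nlinarith
    nlinarith [mul_le_mul_of_nonneg_right h4 hb, mul_le_mul_of_nonneg_left h2 hl1.le]
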